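/- arXiv:2306.12397 — 3 statements merged into one kernel-verified Lean document; each statement's English description precedes it below -/
import Mathlib

section
/- For every natural number n and all y > 0, the Bessel function of half-integer order satisfies Lord Rayleigh's formula: J_{n+1/2}(y) = (-1)^n √(2/π) · y^{n+1/2} · ((1/y) d/dy)^n (sin(y)/y). -/
set_option maxHeartbeats 1000000

open MeasureTheory Real Set

/-- The Bessel function of the first kind of order `α`, defined for `α > -1/2` via the
Poisson integral representation
`J_α(y) = (y/2)^α (Γ(α+1/2)Γ(1/2))⁻¹ ∫_{-1}^1 e^{iys} (1-s²)^{α-1/2} ds`. -/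
noncomputable def besselJ (α : ℝ) (y : ℝ) : ℂ :=
  (((y / 2) ^ α / (Real.Gamma (α + 1 / 2) * Real.Gamma (1 / 2)) : ℝ) : ℂ) *
    ∫ s in Set.Ioo (-1 : ℝ) 1,
      Complex.exp (Complex.I * (y : ℂ) * (s : ℂ)) * (((1 - s ^ 2) ^ (α - 1 / 2) : ℝ) : ℂ)

/-- The operator `f ↦ (1/y) d/dy f` iterated `n` times. -/
noncomputable def rayleighOp : ℕ → (ℝ → ℝ) → (ℝ → ℝ)
  | 0, f => f
  | n + 1, f => fun y => deriv (rayleighOp n f) y / y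

/-- Auxiliary family of integrals. -/
noncomputable def rayG (n : ℕ) (y : ℝ) : ℝ :=
  ∫ s in (-1 : ℝ)..1, Real.cos (y * s) * (1 - s ^ 2) ^ n

lemma rayG_zero (y : ℝ) (hy : y ≠ 0) : rayG 0 y = 2 * (Real.sin y / y) := by
  have hderiv : ∀ s ∈ Set.uIcc (-1 : ℝ) 1,
      HasDerivAt (fun s : ℝ => Real.sin (y * s) / y) (Real.cos (y * s) * (1 - s ^ 2) ^ 0) s := by
    intro s _
    have h1 : HasDerivAt (fun s : ℝ => y * s) y s := by
      simpa using (hasDerivAt_id s).const_mul y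
    have h2 := (Real.hasDerivAt_sin (y * s)).comp s h1
    have h3 := h2.div_const y
    have he : Real.cos (y * s) * y / y = Real.cos (y * s) * (1 - s ^ 2) ^ 0 := by
      rw [pow_zero, mul_one, mul_div_assoc, div_self hy, mul_one]
    rw [← he]
    exact h3
  have hint : IntervalIntegrable (fun s : ℝ => Real.cos (y * s) * (1 - s ^ 2) ^ 0)
      volume (-1) 1 := (by fun_prop : Continuous fun s : ℝ =>
        Real.cos (y * s) * (1 - s ^ 2) ^ 0).intervalIntegrable _ _
  have h := intervalIntegral.integral_eq_sub_of_hasDerivAt hderiv hint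
  rw [rayG, h, mul_one, mul_neg_one, Real.sin_neg]
  ring

lemma rayG_hasDeriv (n : ℕ) (y : ℝ) :
    HasDerivAt (rayG n)
      (∫ s in (-1 : ℝ)..1, -(s * Real.sin (y * s)) * (1 - s ^ 2) ^ n) y := by
  have h := intervalIntegral.hasDerivAt_integral_of_dominated_loc_of_deriv_le
    (F := fun (x : ℝ) (s : ℝ) => Real.cos (x * s) * (1 - s ^ 2) ^ n)
    (F' := fun (x : ℝ) (s : ℝ) => -(s * Real.sin (x * s)) * (1 - s ^ 2) ^ n)
    (x₀ := y) (bound := fun _ => 1) (a := (-1 : ℝ)) (b := 1) (μ := volume)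
    (s := Metric.ball y 1) (Metric.ball_mem_nhds y one_pos)
    (Filter.Eventually.of_forall fun x =>
      ((by fun_prop : Continuous fun s : ℝ =>
        Real.cos (x * s) * (1 - s ^ 2) ^ n)).aestronglyMeasurable.restrict)
    ((by fun_prop : Continuous fun s : ℝ =>
        Real.cos (y * s) * (1 - s ^ 2) ^ n).intervalIntegrable _ _)
    ((by fun_prop : Continuous fun s : ℝ =>
        -(s * Real.sin (y * s)) * (1 - s ^ 2) ^ n).aestronglyMeasurable.restrict)
    ?_ (intervalIntegrable_const)
    ?_
  · exact h.2
  · refine Filter.Eventually.of_forall fun t ht x _ => ?_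
    rw [Set.uIoc_of_le (by norm_num : (-1 : ℝ) ≤ 1)] at ht
    have ht1 : |t| ≤ 1 := abs_le.2 ⟨ht.1.le, ht.2⟩
    have h0 : (0 : ℝ) ≤ 1 - t ^ 2 := by nlinarith [sq_abs t, abs_nonneg t]
    have h1 : 1 - t ^ 2 ≤ 1 := by nlinarith [sq_nonneg t]
    have hs : |Real.sin (x * t)| ≤ 1 :=
      abs_le.2 ⟨Real.neg_one_le_sin _, Real.sin_le_one _⟩
    have hnorm : ‖-(t * Real.sin (x * t)) * (1 - t ^ 2) ^ n‖
        = |t| * |Real.sin (x * t)| * (1 - t ^ 2) ^ n := by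
      rw [Real.norm_eq_abs, abs_mul, abs_neg, abs_mul, abs_pow, abs_of_nonneg h0]
    rw [hnorm]
    have hp : (1 - t ^ 2) ^ n ≤ 1 := pow_le_one₀ h0 h1
    exact mul_le_one₀ (mul_le_one₀ ht1 (abs_nonneg _) hs) (pow_nonneg h0 n) hp
  · refine Filter.Eventually.of_forall fun t _ x _ => ?_
    have h1 : HasDerivAt (fun x : ℝ => x * t) t x := hasDerivAt_mul_const t
    have h2 := ((Real.hasDerivAt_cos (x * t)).comp x h1).mul_const ((1 - t ^ 2) ^ n)
    refine h2.congr_deriv ?_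
    ring

lemma rayG_parts (n : ℕ) (y : ℝ) :
    ∫ s in (-1 : ℝ)..1, -(s * Real.sin (y * s)) * (1 - s ^ 2) ^ n
      = -(y / (2 * (n + 1))) * rayG (n + 1) y := by
  have hud : ∀ x ∈ Set.uIcc (-1 : ℝ) 1,
      HasDerivAt (fun s : ℝ => (1 - s ^ 2) ^ (n + 1) / (2 * (n + 1)))
        (-(x * (1 - x ^ 2) ^ n)) x := by
    intro x _
    have h1 : HasDerivAt (fun s : ℝ => 1 - s ^ 2) (-(2 * x)) x := by
      simpa using ((hasDerivAt_pow 2 x).const_sub 1)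
    have h2 := (h1.pow (n + 1)).div_const (2 * (n + 1))
    refine h2.congr_deriv ?_
    have hne : ((2 : ℝ) * (n + 1)) ≠ 0 := by positivity
    rw [Nat.add_sub_cancel]
    push_cast
    field_simp
  have hvd : ∀ x ∈ Set.uIcc (-1 : ℝ) 1,
      HasDerivAt (fun s : ℝ => Real.sin (y * s)) (Real.cos (y * x) * y) x := by
    intro x _
    have h1 : HasDerivAt (fun s : ℝ => y * s) y x := by
      simpa using (hasDerivAt_id x).const_mul y
    exact (Real.hasDerivAt_sin (y * x)).comp x h1
  have hu' : IntervalIntegrable (fun x : ℝ => -(x * (1 - x ^ 2) ^ n)) volume (-1) 1 :=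
    (by fun_prop : Continuous fun x : ℝ => -(x * (1 - x ^ 2) ^ n)).intervalIntegrable _ _
  have hv' : IntervalIntegrable (fun x : ℝ => Real.cos (y * x) * y) volume (-1) 1 :=
    (by fun_prop : Continuous fun x : ℝ => Real.cos (y * x) * y).intervalIntegrable _ _
  have hparts := intervalIntegral.integral_deriv_mul_eq_sub hud hvd hu' hv'
  have hb : ((1 : ℝ) - 1 ^ 2) ^ (n + 1) / (2 * (n + 1)) * Real.sin (y * 1)
      - (1 - (-1 : ℝ) ^ 2) ^ (n + 1) / (2 * (n + 1)) * Real.sin (y * (-1)) = 0 := by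
    norm_num
  rw [hb] at hparts
  have hsplit : (∫ x in (-1 : ℝ)..1, -(x * (1 - x ^ 2) ^ n) * Real.sin (y * x))
      + ∫ x in (-1 : ℝ)..1,
        (1 - x ^ 2) ^ (n + 1) / (2 * (n + 1)) * (Real.cos (y * x) * y) = 0 := by
    rw [← intervalIntegral.integral_add
      ((by fun_prop : Continuous fun x : ℝ =>
        -(x * (1 - x ^ 2) ^ n) * Real.sin (y * x)).intervalIntegrable _ _)
      ((by fun_prop : Continuous fun x : ℝ =>
        (1 - x ^ 2) ^ (n + 1) / (2 * (n + 1)) * (Real.cos (y * x) * y)).intervalIntegrable _ _)]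
    exact hparts
  have h2 : (∫ x in (-1 : ℝ)..1,
        (1 - x ^ 2) ^ (n + 1) / (2 * (n + 1)) * (Real.cos (y * x) * y))
      = (y / (2 * (n + 1))) * rayG (n + 1) y := by
    rw [rayG, ← intervalIntegral.integral_const_mul]
    congr 1
    funext x
    have hne : ((2 : ℝ) * (n + 1)) ≠ 0 := by positivity
    field_simp
  have h3 : (∫ s in (-1 : ℝ)..1, -(s * Real.sin (y * s)) * (1 - s ^ 2) ^ n)
      = ∫ x in (-1 : ℝ)..1, -(x * (1 - x ^ 2) ^ n) * Real.sin (y * x) := by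
    congr 1
    funext x
    ring
  rw [h3]
  linarith [hsplit, h2]

lemma rayleigh_eq (n : ℕ) : ∀ y : ℝ, 0 < y →
    rayleighOp n (fun t => Real.sin t / t) y
      = (-1 : ℝ) ^ n / (2 ^ (n + 1) * n.factorial) * rayG n y := by
  induction n with
  | zero =>
    intro y hy
    show Real.sin y / y = _
    rw [rayG_zero y hy.ne']
    simp [Nat.factorial]
  | succ n ih =>
    intro y hy
    have heq : rayleighOp n (fun t => Real.sin t / t)
        =ᶠ[nhds y] fun z => (-1 : ℝ) ^ n / (2 ^ (n + 1) * n.factorial) * rayG n z := by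
      filter_upwards [IsOpen.mem_nhds isOpen_Ioi hy] with z hz
      exact ih z hz
    have hd : deriv (rayleighOp n (fun t => Real.sin t / t)) y
        = (-1 : ℝ) ^ n / (2 ^ (n + 1) * n.factorial)
          * (-(y / (2 * (n + 1))) * rayG (n + 1) y) := by
      rw [heq.deriv_eq]
      rw [deriv_const_mul _ (rayG_hasDeriv n y).differentiableAt,
        (rayG_hasDeriv n y).deriv, rayG_parts]
    show deriv (rayleighOp n (fun t => Real.sin t / t)) y / y = _
    rw [hd]
    have hfac : ((n + 1).factorial : ℝ) = (n + 1) * n.factorial := by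
      rw [Nat.factorial_succ]; push_cast; ring
    have hne1 : (n.factorial : ℝ) ≠ 0 := Nat.cast_ne_zero.2 n.factorial_ne_zero
    have hne2 : ((n : ℝ) + 1) ≠ 0 := by positivity
    rw [hfac]
    push_cast
    field_simp
    ring

lemma sin_part_zero (n : ℕ) (y : ℝ) :
    (∫ s in (-1 : ℝ)..1, Real.sin (y * s) * (1 - s ^ 2) ^ n) = 0 := by
  have h := intervalIntegral.integral_comp_neg
    (a := (-1 : ℝ)) (b := 1) (fun s : ℝ => Real.sin (y * s) * (1 - s ^ 2) ^ n)
  simp only [neg_neg] at h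
  have h2 : ∀ x : ℝ, Real.sin (y * -x) * (1 - (-x) ^ 2) ^ n
      = -(Real.sin (y * x) * (1 - x ^ 2) ^ n) := by
    intro x
    rw [mul_neg, Real.sin_neg, neg_sq]
    ring
  simp_rw [h2] at h
  rw [intervalIntegral.integral_neg] at h
  linarith

lemma besselJ_eq (n : ℕ) (y : ℝ) (hy : 0 < y) :
    besselJ ((n : ℝ) + 1 / 2) y =
      (((y / 2) ^ ((n : ℝ) + 1 / 2) / (n.factorial * Real.sqrt Real.pi)
        * rayG n y : ℝ) : ℂ) := by
  rw [besselJ]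
  have hg1 : Real.Gamma ((n : ℝ) + 1 / 2 + 1 / 2) = n.factorial := by
    rw [show ((n : ℝ) + 1 / 2 + 1 / 2) = (n : ℝ) + 1 by ring]
    exact_mod_cast Real.Gamma_nat_eq_factorial n
  have hg2 : Real.Gamma (1 / 2 : ℝ) = Real.sqrt Real.pi := Real.Gamma_one_half_eq
  rw [hg1, hg2]
  have hint : (∫ s in Set.Ioo (-1 : ℝ) 1,
      Complex.exp (Complex.I * (y : ℂ) * (s : ℂ))
        * (((1 - s ^ 2) ^ ((n : ℝ) + 1 / 2 - 1 / 2) : ℝ) : ℂ))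
      = ((rayG n y : ℝ) : ℂ) := by
    have hioo : (∫ s in Set.Ioo (-1 : ℝ) 1,
        Complex.exp (Complex.I * (y : ℂ) * (s : ℂ))
          * (((1 - s ^ 2) ^ ((n : ℝ) + 1 / 2 - 1 / 2) : ℝ) : ℂ))
        = ∫ s in (-1 : ℝ)..1,
            Complex.exp (Complex.I * (y : ℂ) * (s : ℂ))
              * (((1 - s ^ 2) ^ ((n : ℝ) + 1 / 2 - 1 / 2) : ℝ) : ℂ) := by
      rw [intervalIntegral.integral_of_le (by norm_num : (-1 : ℝ) ≤ 1),
        ← MeasureTheory.integral_Ioc_eq_integral_Ioo]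
    rw [hioo]
    have hexp : ∀ s : ℝ, Complex.exp (Complex.I * (y : ℂ) * (s : ℂ))
        * (((1 - s ^ 2) ^ ((n : ℝ) + 1 / 2 - 1 / 2) : ℝ) : ℂ)
        = ((Real.cos (y * s) * (1 - s ^ 2) ^ n : ℝ) : ℂ)
          + ((Real.sin (y * s) * (1 - s ^ 2) ^ n : ℝ) : ℂ) * Complex.I := by
      intro s
      have h1 : ((n : ℝ) + 1 / 2 - 1 / 2) = (n : ℝ) := by ring
      rw [h1, Real.rpow_natCast]
      have h2 : Complex.I * (y : ℂ) * (s : ℂ) = ((y * s : ℝ) : ℂ) * Complex.I := by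
        push_cast; ring
      rw [h2, Complex.exp_mul_I]
      push_cast
      ring
    simp_rw [hexp]
    rw [intervalIntegral.integral_add
      ((by fun_prop : Continuous fun s : ℝ =>
        ((Real.cos (y * s) * (1 - s ^ 2) ^ n : ℝ) : ℂ)).intervalIntegrable _ _)
      ((by fun_prop : Continuous fun s : ℝ =>
        ((Real.sin (y * s) * (1 - s ^ 2) ^ n : ℝ) : ℂ) * Complex.I).intervalIntegrable _ _)]
    rw [intervalIntegral.integral_mul_const, intervalIntegral.integral_ofReal,
      intervalIntegral.integral_ofReal, sin_part_zero]
    simp [rayG]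
  rw [hint]
  push_cast
  ring

/-- **Lord Rayleigh's formula.**
`J_{n+1/2}(y) = (-1)^n √(2/π) y^{n+1/2} ((1/y) d/dy)^n (sin y / y)` for all `y > 0`. -/
theorem stmt3 (n : ℕ) (y : ℝ) (hy : 0 < y) :
    besselJ ((n : ℝ) + 1 / 2) y =
      (((-1 : ℝ) ^ n * Real.sqrt (2 / Real.pi) * y ^ ((n : ℝ) + 1 / 2) *
        rayleighOp n (fun t => Real.sin t / t) y : ℝ) : ℂ) := by
  rw [besselJ_eq n y hy, rayleigh_eq n y hy]
  rw [Complex.ofReal_inj]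
  have hm : ((-1 : ℝ)) ^ n * (-1 : ℝ) ^ n = 1 := by
    rw [← mul_pow]; norm_num
  have hkey : ((2 : ℝ)) ^ ((n : ℝ) + 1 / 2) * (2 : ℝ) ^ ((1 : ℝ) / 2) = 2 ^ (n + 1) := by
    rw [← Real.rpow_add two_pos,
      show (n : ℝ) + 1 / 2 + 1 / 2 = ((n + 1 : ℕ) : ℝ) by push_cast; ring,
      Real.rpow_natCast]
  have hc : (0 : ℝ) < (2 : ℝ) ^ ((n : ℝ) + 1 / 2) := Real.rpow_pos_of_pos two_pos _
  have hd : (0 : ℝ) < (2 : ℝ) ^ ((1 : ℝ) / 2) := Real.rpow_pos_of_pos two_pos _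
  have he : (0 : ℝ) < Real.sqrt Real.pi := Real.sqrt_pos.2 Real.pi_pos
  have hn : (0 : ℝ) < (n.factorial : ℝ) := by positivity
  have hsq : ((-1 : ℝ)) ^ (n * 2) = 1 := by
    rw [mul_comm, pow_mul]; norm_num
  rw [Real.div_rpow hy.le (by norm_num : (0 : ℝ) ≤ 2),
    Real.sqrt_eq_rpow (2 / Real.pi),
    Real.div_rpow (by norm_num : (0 : ℝ) ≤ 2) Real.pi_pos.le,
    Real.sqrt_eq_rpow Real.pi, ← hkey]
  field_simp
  ring_nf
  rw [hsq]
  ring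
end

section
/- Let Ω : ℝᵈ → ℝ₊ be a Lipschitz function with Lipschitz constant C and Ω(0) = 0, and suppose ∫_{ℝᵈ} Ω(x)(1+|x|)^{-γ} dx < ∞ for some γ < d+1. For j ≥ 1 let E_j := B(0, 2^{j+1}) \ B(0, 2^j), E₀ := B(0,1), and λ_j := sup_{E_j} Ω. Then Σ_{j≥0} 2^{-jγ} λ_j^{d+1} < ∞. -/
open MeasureTheory Real Set Metric

/-- Weight lower bound: if `2^j ≤ t ≤ 2^(j+4)` then
`t^(-γ) ≥ 2^(-4|γ|) * 2^(-(j+1)γ)`. -/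
lemma stmt12_weight_lb (γ : ℝ) (j : ℕ) (t : ℝ) (h1 : (2:ℝ)^j ≤ t) (h2 : t ≤ 2^(j+4)) :
    (2:ℝ)^(-(4*|γ|)) * (2:ℝ)^(-((j:ℝ)+1)*γ) ≤ t^(-γ) := by
  have ht : 0 < t := lt_of_lt_of_le (by positivity) h1
  rw [← Real.rpow_add two_pos]
  rcases le_total 0 γ with hγ | hγ
  · rw [abs_of_nonneg hγ]
    calc (2:ℝ) ^ (-(4*γ) + -((j:ℝ)+1)*γ) ≤ (2:ℝ) ^ ((((j:ℝ))+4) * (-γ)) := by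
          apply Real.rpow_le_rpow_of_exponent_le one_le_two; nlinarith
      _ = ((2:ℝ)^((j+4:ℕ))) ^ (-γ) := by
          rw [← Real.rpow_natCast 2 (j+4), ← Real.rpow_mul (by norm_num)]
          push_cast; ring_nf
      _ ≤ t ^ (-γ) := Real.rpow_le_rpow_of_nonpos ht h2 (by linarith)
  · rw [abs_of_nonpos hγ]
    calc (2:ℝ) ^ (-(4*(-γ)) + -((j:ℝ)+1)*γ) ≤ (2:ℝ) ^ ((j:ℝ) * (-γ)) := by
          apply Real.rpow_le_rpow_of_exponent_le one_le_two; nlinarith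
      _ = ((2:ℝ)^(j:ℕ)) ^ (-γ) := by
          rw [← Real.rpow_natCast 2 j, ← Real.rpow_mul (by norm_num)]
      _ ≤ t ^ (-γ) := Real.rpow_le_rpow (by positivity) h1 (by linarith)

/-- Sum of integrals of a nonnegative integrable function over pairwise disjoint
measurable sets is at most the total integral. -/
lemma stmt12_sum_setIntegral_le {X : Type*} [MeasurableSpace X] {μ : Measure X}
    {g : X → ℝ} (hg : Integrable g μ) (hg0 : ∀ x, 0 ≤ g x) (s : Finset ℕ)
    (B : ℕ → Set X) (hmeas : ∀ j, MeasurableSet (B j))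
    (hdisj : (s : Set ℕ).Pairwise (Function.onFun Disjoint B)) :
    ∑ j ∈ s, ∫ x in B j, g x ∂μ ≤ ∫ x, g x ∂μ := by
  rw [← integral_biUnion_finset s (fun j _ => hmeas j) hdisj
    (fun j _ => hg.integrableOn)]
  exact setIntegral_le_integral hg (Filter.Eventually.of_forall hg0)

/-- If `Ω : ℝᵈ → ℝ₊` is `C`-Lipschitz with `Ω 0 = 0` and
`∫ Ω(x)(1+|x|)^{-γ} dx < ∞` for some `γ < d+1`, then with `E₀ = B(0,1)`,
`E_j = B(0,2^{j+1}) \ B(0,2^j)` and `λ_j = sup_{E_j} Ω`, one has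
`Σ_j 2^{-jγ} λ_j^{d+1} < ∞`. -/
theorem stmt12 (d : ℕ) (hd : 1 ≤ d) (γ : ℝ) (hγ : γ < (d : ℝ) + 1)
    (Ω : EuclideanSpace ℝ (Fin d) → ℝ) (C : ℝ) (hC : 0 < C)
    (hpos : ∀ x, 0 ≤ Ω x) (hLip : ∀ x y, |Ω x - Ω y| ≤ C * ‖x - y‖) (h0 : Ω 0 = 0)
    (hint : Integrable (fun x => Ω x * (1 + ‖x‖) ^ (-γ)) volume)
    (E : ℕ → Set (EuclideanSpace ℝ (Fin d)))
    (hE0 : E 0 = closedBall 0 1)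
    (hEj : ∀ j : ℕ, 1 ≤ j → E j = closedBall 0 (2 ^ (j + 1)) \ ball 0 (2 ^ j))
    (lam : ℕ → ℝ) (hlam : ∀ j, lam j = sSup (Ω '' E j)) :
    Summable (fun j : ℕ => (2 : ℝ) ^ (-(j : ℝ) * γ) * lam j ^ (d + 1)) := by
  -- Continuity of Ω
  have hcont : Continuous Ω := by
    refine (LipschitzWith.of_dist_le_mul (K := C.toNNReal) (f := Ω) ?_).continuous
    intro x y
    rw [Real.dist_eq, dist_eq_norm, Real.coe_toNNReal C hC.le]
    exact hLip x y
  -- Description of E (j+1)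
  have hEdesc : ∀ j : ℕ, E (j+1) = closedBall 0 (2 ^ (j + 2)) \ ball 0 (2 ^ (j+1)) := by
    intro j; rw [hEj (j+1) (by omega)]
  -- E (j+1) is nonempty and compact; choose a maximum point
  have key : ∀ j : ℕ, ∃ x, x ∈ E (j+1) ∧ ∀ y ∈ E (j+1), Ω y ≤ Ω x := by
    intro j
    have hcompact : IsCompact (E (j+1)) := by
      rw [hEdesc j]
      exact (isCompact_closedBall 0 _).diff isOpen_ball
    have hne : (E (j+1)).Nonempty := by
      refine ⟨EuclideanSpace.single (⟨0, hd⟩ : Fin d) ((2:ℝ)^(j+1)), ?_⟩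
      rw [hEdesc j]
      constructor
      · rw [mem_closedBall, dist_zero_right, EuclideanSpace.norm_single]
        rw [Real.norm_eq_abs, abs_of_nonneg (by positivity)]
        apply pow_le_pow_right₀ one_le_two; omega
      · rw [mem_ball, dist_zero_right, EuclideanSpace.norm_single]
        rw [Real.norm_eq_abs, abs_of_nonneg (by positivity)]
        exact lt_irrefl _
    obtain ⟨x, hx, hmax⟩ := hcompact.exists_isMaxOn hne hcont.continuousOn
    exact ⟨x, hx, fun y hy => hmax hy⟩
  choose x hxE hxmax using key
  -- lam (j+1) = Ω (x j)
  have hlam_eq : ∀ j, lam (j+1) = Ω (x j) := by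
    intro j
    rw [hlam (j+1)]
    apply le_antisymm
    · apply csSup_le ((Set.nonempty_of_mem (hxE j)).image Ω)
      rintro _ ⟨y, hy, rfl⟩; exact hxmax j y hy
    · apply le_csSup ⟨Ω (x j), by rintro _ ⟨y, hy, rfl⟩; exact hxmax j y hy⟩
      exact ⟨x j, hxE j, rfl⟩
  set g : EuclideanSpace ℝ (Fin d) → ℝ := fun y => Ω y * (1 + ‖y‖) ^ (-γ) with hgdef
  have hg0 : ∀ y, 0 ≤ g y := fun y =>
    mul_nonneg (hpos y) (Real.rpow_nonneg (by positivity) _)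
  set r : ℕ → ℝ := fun j => Ω (x j) / (4 * C) with hrdef
  set B : ℕ → Set (EuclideanSpace ℝ (Fin d)) := fun j => closedBall (x j) (r j) with hBdef
  -- bounds on x j
  have hxlb : ∀ j, (2:ℝ)^(j+1) ≤ ‖x j‖ := by
    intro j
    have := hxE j; rw [hEdesc j] at this
    have h2 := this.2; rw [mem_ball, dist_zero_right] at h2; linarith [not_lt.mp h2]
  have hxub : ∀ j, ‖x j‖ ≤ (2:ℝ)^(j+2) := by
    intro j
    have := hxE j; rw [hEdesc j] at this
    have h1 := this.1; rwa [mem_closedBall, dist_zero_right] at h1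
  have hOm0 : ∀ j, 0 ≤ Ω (x j) := fun j => hpos (x j)
  have hOmub : ∀ j, Ω (x j) ≤ C * 2^(j+2) := by
    intro j
    have h := hLip (x j) 0
    rw [h0, sub_zero, sub_zero, abs_of_nonneg (hOm0 j)] at h
    calc Ω (x j) ≤ C * ‖x j‖ := h
      _ ≤ C * 2^(j+2) := by
          apply mul_le_mul_of_nonneg_left (hxub j) hC.le
  have hr0 : ∀ j, 0 ≤ r j := fun j => div_nonneg (hOm0 j) (by positivity)
  have hrle : ∀ j, r j ≤ 2^j := by
    intro j
    rw [hrdef]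
    rw [div_le_iff₀ (by positivity)]
    calc Ω (x j) ≤ C * 2^(j+2) := hOmub j
      _ = 2^j * (4*C) := by ring
  -- members of B j lie in the annulus [2^j, 2^(j+3))
  have hBann : ∀ j, ∀ y ∈ B j, (2:ℝ)^j ≤ ‖y‖ ∧ ‖y‖ < 2^(j+3) := by
    intro j y hy
    rw [hBdef, mem_closedBall, dist_eq_norm] at hy
    have h1 : |‖y‖ - ‖x j‖| ≤ ‖y - x j‖ := abs_norm_sub_norm_le _ _
    have h2 := abs_le.mp h1
    have e1 : (2:ℝ)^(j+1) = 2 * 2^j := by ring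
    have e2 : (2:ℝ)^(j+2) = 4 * 2^j := by ring
    have e3 : (2:ℝ)^(j+3) = 8 * 2^j := by ring
    constructor
    · nlinarith [hxlb j, hrle j, h2.1, h2.2]
    · nlinarith [hxub j, hrle j, h2.1, h2.2, pow_pos (two_pos (α := ℝ)) j]
  -- Ω is at least half the max on B j
  have hΩlb : ∀ j, ∀ y ∈ B j, Ω (x j) / 2 ≤ Ω y := by
    intro j y hy
    rw [hBdef, mem_closedBall, dist_eq_norm] at hy
    have h := (abs_le.mp (hLip (x j) y)).2
    have h2 : C * ‖x j - y‖ ≤ C * r j := by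
      apply mul_le_mul_of_nonneg_left _ hC.le
      rwa [norm_sub_rev]
    have h3 : C * r j = Ω (x j) / 4 := by
      rw [hrdef]; field_simp
    nlinarith [hOm0 j]
  set cγ : ℝ := (2:ℝ)^(-(4*|γ|)) with hcγdef
  have hcγ0 : 0 < cγ := Real.rpow_pos_of_pos two_pos _
  set V : ℝ := (volume (ball (0 : EuclideanSpace ℝ (Fin d)) 1)).toReal with hVdef
  have hV0 : 0 < V := by
    rw [hVdef]
    exact ENNReal.toReal_pos (measure_ball_pos volume 0 one_pos).ne' measure_ball_lt_top.ne
  -- pointwise lower bound for g on B j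
  have hglb : ∀ j, ∀ y ∈ B j,
      (Ω (x j) / 2) * (cγ * (2:ℝ)^(-((j:ℝ)+1)*γ)) ≤ g y := by
    intro j y hy
    obtain ⟨ha, hb⟩ := hBann j y hy
    have hw : cγ * (2:ℝ)^(-((j:ℝ)+1)*γ) ≤ (1 + ‖y‖) ^ (-γ) := by
      apply stmt12_weight_lb
      · have := norm_nonneg y; linarith
      · have e : (2:ℝ)^(j+4) = 2^(j+3) + 2^(j+3) := by ring
        have : (1:ℝ) ≤ 2^(j+3) := one_le_pow₀ one_le_two
        linarith
    calc (Ω (x j) / 2) * (cγ * (2:ℝ)^(-((j:ℝ)+1)*γ))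
        ≤ Ω y * ((1 + ‖y‖) ^ (-γ)) := by
          apply mul_le_mul (hΩlb j y hy) hw (by positivity) (hpos y)
      _ = g y := rfl
  -- volume of B j
  have hvol : ∀ j, (volume (B j)).toReal = (r j)^d * V := by
    intro j
    rw [hBdef]
    rw [Measure.addHaar_closedBall volume (x j) (hr0 j), finrank_euclideanSpace_fin,
      ENNReal.toReal_mul, ENNReal.toReal_ofReal (pow_nonneg (hr0 j) d)]
  -- integral lower bound on B j
  have hintlb : ∀ j, (Ω (x j) / 2) * (cγ * (2:ℝ)^(-((j:ℝ)+1)*γ)) * ((r j)^d * V)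
      ≤ ∫ y in B j, g y := by
    intro j
    rw [← hvol j]
    have := setIntegral_ge_of_const_le_real measurableSet_closedBall
      measure_closedBall_lt_top.ne (hglb j) hint.integrableOn
    exact this
  set K : ℝ := 2 * (4*C)^d / (cγ * V) with hKdef
  have hK0 : 0 < K := by positivity
  -- the key per-term bound
  have hkey : ∀ j : ℕ, (2:ℝ) ^ (-((j:ℕ)+1 : ℕ) * γ : ℝ) * lam (j+1) ^ (d + 1)
      ≤ K * ∫ y in B j, g y := by
    intro j
    have hcast : (((j:ℕ)+1 : ℕ) : ℝ) = (j:ℝ) + 1 := by push_cast; ring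
    have heq : (2:ℝ) ^ (-((j:ℝ)+1) * γ) * lam (j+1) ^ (d + 1)
        = K * ((Ω (x j) / 2) * (cγ * (2:ℝ)^(-((j:ℝ)+1)*γ)) * ((r j)^d * V)) := by
      rw [hlam_eq j, hKdef, hrdef]
      rw [pow_succ, div_pow]
      field_simp
    calc (2:ℝ) ^ (-((j:ℕ)+1 : ℕ) * γ : ℝ) * lam (j+1) ^ (d + 1)
        = (2:ℝ) ^ (-((j:ℝ)+1) * γ) * lam (j+1) ^ (d + 1) := by rw [hcast]
      _ = K * ((Ω (x j) / 2) * (cγ * (2:ℝ)^(-((j:ℝ)+1)*γ)) * ((r j)^d * V)) := heq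
      _ ≤ K * ∫ y in B j, g y := by
          apply mul_le_mul_of_nonneg_left (hintlb j) hK0.le
  -- disjointness of far-apart balls
  have hdisj : ∀ i j : ℕ, i + 3 ≤ j → Disjoint (B i) (B j) := by
    intro i j hij
    rw [Set.disjoint_left]
    intro y hyi hyj
    have h1 := (hBann i y hyi).2
    have h2 := (hBann j y hyj).1
    have h3 : (2:ℝ)^(i+3) ≤ 2^j := pow_le_pow_right₀ one_le_two hij
    linarith
  -- summability of the integrals
  have hsum : Summable (fun j => ∫ y in B j, g y) := by
    apply summable_of_sum_range_le (c := 3 * ∫ y, g y)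
    · intro j
      exact setIntegral_nonneg measurableSet_closedBall (fun y _ => hg0 y)
    · intro n
      rw [← Finset.sum_fiberwise_of_maps_to (t := Finset.range 3) (g := fun j => j % 3)
        (fun i _ => Finset.mem_range.mpr (Nat.mod_lt _ (by norm_num)))
        (fun j => ∫ y in B j, g y)]
      calc ∑ k ∈ Finset.range 3, ∑ j ∈ (Finset.range n).filter (fun j => j % 3 = k),
              ∫ y in B j, g y
          ≤ ∑ _k ∈ Finset.range 3, ∫ y, g y := by
            apply Finset.sum_le_sum
            intro k _
            apply stmt12_sum_setIntegral_le hint hg0 _ B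
              (fun j => measurableSet_closedBall)
            intro i hi j hj hne
            simp only [Finset.coe_filter, Set.mem_setOf_eq] at hi hj
            rcases lt_or_gt_of_ne hne with h | h
            · exact hdisj i j (by omega)
            · exact (hdisj j i (by omega)).symm
        _ = 3 * ∫ y, g y := by
            rw [Finset.sum_const, Finset.card_range]; push_cast; ring
  -- conclude
  rw [← summable_nat_add_iff 1]
  apply Summable.of_nonneg_of_le
    (fun j => mul_nonneg (Real.rpow_nonneg (by norm_num) _)
      (pow_nonneg (by rw [hlam_eq j]; exact hOm0 j) _))
    (fun j => hkey j)
    (hsum.mul_left K)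
end

section
/- Let Ω : ℝᵈ → ℝ₊ be Lipschitz with Ω(0) = 0 and ∫_{ℝᵈ} Ω(x)(1+|x|)^{-γ} dx < ∞ for some γ < d+1. Define Ω₁(x) := λ_j for x in the dyadic annulus E_j (where λ_j := sup_{E_j} Ω, E₀ := B(0,1), E_j := B(0,2^{j+1}) \ B(0,2^j) for j ≥ 1). Then Ω ≤ Ω₁ pointwise and ∫_{ℝᵈ} Ω₁(x)(1+|x|²)^{-(d+1)/2} dx < ∞. -/
open MeasureTheory Real Set Metric

set_option maxHeartbeats 1000000 in
/-- Under the hypotheses of Statement 12, the piecewise-constant radial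
majorant `Ω₁` (equal to `λ_j = sup_{E_j} Ω` on the dyadic annulus `E_j`) satisfies
`Ω ≤ Ω₁` pointwise and `∫ Ω₁(x)(1+|x|²)^{-(d+1)/2} dx < ∞`. -/
theorem stmt14 (d : ℕ) (hd : 1 ≤ d) (γ : ℝ) (hγ : γ < (d : ℝ) + 1)
    (Ω : EuclideanSpace ℝ (Fin d) → ℝ) (C : ℝ) (hC : 0 < C)
    (hpos : ∀ x, 0 ≤ Ω x) (hLip : ∀ x y, |Ω x - Ω y| ≤ C * ‖x - y‖) (h0 : Ω 0 = 0)
    (hint : Integrable (fun x => Ω x * (1 + ‖x‖) ^ (-γ)) volume)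
    (E : ℕ → Set (EuclideanSpace ℝ (Fin d)))
    (hE0 : E 0 = closedBall 0 2)
    (hEj : ∀ j : ℕ, 1 ≤ j → E j = closedBall 0 (2 ^ (j + 1)) \ ball 0 (2 ^ j))
    (lam : ℕ → ℝ) (hlam : ∀ j, lam j = sSup (Ω '' E j))
    (Ω₁ : EuclideanSpace ℝ (Fin d) → ℝ)
    (hΩ₁ : ∀ x, ∃ j : ℕ, x ∈ E j ∧ Ω₁ x = lam j) :
    (∀ x, Ω x ≤ Ω₁ x) ∧
      Integrable (fun x => Ω₁ x * (1 + ‖x‖ ^ 2) ^ (-((d : ℝ) + 1) / 2)) volume := by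
  classical
  have hΩcont : Continuous Ω := by
    have : LipschitzWith C.toNNReal Ω := by
      apply LipschitzWith.of_dist_le_mul
      intro x y
      rw [Real.dist_eq, dist_eq_norm, Real.coe_toNNReal C hC.le]
      exact hLip x y
    exact this.continuous
  have hΩle : ∀ x, Ω x ≤ C * ‖x‖ := by
    intro x
    have h := hLip x 0
    rw [h0, sub_zero, sub_zero, abs_of_nonneg (hpos x)] at h
    exact h
  have hE_norm : ∀ j (x : EuclideanSpace ℝ (Fin d)), x ∈ E j → ‖x‖ ≤ 2 ^ (j + 1) := by
    intro j x hx
    rcases Nat.eq_zero_or_pos j with hj | hj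
    · subst hj; rw [hE0] at hx
      rw [mem_closedBall, dist_zero_right] at hx
      simpa using hx
    · rw [hEj j hj] at hx
      have := hx.1
      rwa [mem_closedBall, dist_zero_right] at this
  have hE_norm' : ∀ j (x : EuclideanSpace ℝ (Fin d)), 1 ≤ j → x ∈ E j → (2:ℝ) ^ j ≤ ‖x‖ := by
    intro j x hj hx
    rw [hEj j hj] at hx
    have := hx.2
    rw [mem_ball, dist_zero_right, not_lt] at this
    exact this
  have hlam_nonneg : ∀ j, 0 ≤ lam j := by
    intro j; rw [hlam]
    exact Real.sSup_nonneg (by rintro y ⟨x, -, rfl⟩; exact hpos x)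
  have hbdd : ∀ j, BddAbove (Ω '' E j) := by
    intro j
    refine ⟨C * 2 ^ (j + 1), ?_⟩
    rintro y ⟨x, hx, rfl⟩
    exact (hΩle x).trans (mul_le_mul_of_nonneg_left (hE_norm j x hx) hC.le)
  have hlam_le : ∀ j, lam j ≤ C * 2 ^ (j + 1) := by
    intro j; rw [hlam]
    apply Real.sSup_le
    · rintro y ⟨x, hx, rfl⟩
      exact (hΩle x).trans (mul_le_mul_of_nonneg_left (hE_norm j x hx) hC.le)
    · positivity
  have part1 : ∀ x, Ω x ≤ Ω₁ x := by
    intro x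
    obtain ⟨j, hxj, hval⟩ := hΩ₁ x
    rw [hval, hlam]
    exact le_csSup (hbdd j) ⟨x, hxj, rfl⟩
  have hΩ₁nonneg : ∀ x, 0 ≤ Ω₁ x := fun x => (hpos x).trans (part1 x)
  refine ⟨part1, ?_⟩
  -- replace γ by γ' = max γ 0
  set γ' : ℝ := max γ 0 with hγ'def
  have hγ'0 : 0 ≤ γ' := le_max_right _ _
  have hγ'lt : γ' < (d : ℝ) + 1 := max_lt hγ (by positivity)
  have hw0cont : Continuous fun x : EuclideanSpace ℝ (Fin d) => (1 + ‖x‖) ^ (-γ') := by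
    apply Continuous.rpow_const (continuous_const.add continuous_norm)
    intro x; left; exact (by positivity : (0:ℝ) < 1 + ‖x‖).ne'
  have hint' :
      Integrable (fun x : EuclideanSpace ℝ (Fin d) => Ω x * (1 + ‖x‖) ^ (-γ')) volume := by
    refine hint.mono' ((hΩcont.mul hw0cont).aestronglyMeasurable) ?_
    filter_upwards with x
    have h1 : (0:ℝ) < 1 + ‖x‖ := by positivity
    rw [Real.norm_eq_abs,
      abs_of_nonneg (mul_nonneg (hpos x) (Real.rpow_nonneg h1.le _))]
    exact mul_le_mul_of_nonneg_left
      (Real.rpow_le_rpow_of_exponent_le (by linarith [norm_nonneg x]) (neg_le_neg (le_max_left _ _))) (hpos x)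
  set I : ℝ := ∫ x, Ω x * (1 + ‖x‖) ^ (-γ') with hIdef
  have hI0 : 0 ≤ I := integral_nonneg fun x => by
    have h1 : (0:ℝ) < 1 + ‖x‖ := by positivity
    exact mul_nonneg (hpos x) (Real.rpow_nonneg h1.le _)
  set B : ℝ := (volume (closedBall (0 : EuclideanSpace ℝ (Fin d)) 1)).toReal with hBdef
  have hB : 0 < B :=
    ENNReal.toReal_pos (measure_closedBall_pos volume _ one_pos).ne'
      measure_closedBall_lt_top.ne
  set K : ℝ := 2 * (4 * C) ^ d * ((2:ℝ) ^ ((3:ℝ) * γ')) * I / B with hKdef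
  have hK0 : 0 ≤ K := by positivity
  have key : ∀ j, lam j ^ (d + 1) ≤ K * (2:ℝ) ^ ((j : ℝ) * γ') := by
    intro j
    rcases eq_or_lt_of_le (hlam_nonneg j) with hlj | hlj
    · rw [← hlj, zero_pow (by omega)]; positivity
    have hne : (Ω '' E j).Nonempty := by
      by_contra h
      rw [not_nonempty_iff_eq_empty] at h
      rw [hlam, h, Real.sSup_empty] at hlj
      exact lt_irrefl 0 hlj
    obtain ⟨y, ⟨x₀, hx₀E, rfl⟩, hy⟩ :=
      exists_lt_of_lt_csSup hne
        (show (3/4) * lam j < sSup (Ω '' E j) by rw [← hlam]; linarith)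
    set r : ℝ := lam j / (4 * C) with hrdef
    have hr0 : 0 < r := by positivity
    have hrle : r ≤ 2 ^ (j + 1) / 4 := by
      rw [hrdef, div_le_div_iff₀ (by positivity) (by norm_num)]
      have := hlam_le j
      nlinarith
    have hx₀n : ‖x₀‖ ≤ 2 ^ (j + 1) := hE_norm j x₀ hx₀E
    have h2le : (2:ℝ) ≤ 2 ^ (j + 1) := by
      calc (2:ℝ) = 2 ^ 1 := by norm_num
      _ ≤ 2 ^ (j + 1) := by
        apply pow_le_pow_right₀ (by norm_num); omega
    have hball : ∀ x ∈ closedBall x₀ r,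
        (lam j / 2) * ((2:ℝ) ^ (j + 3)) ^ (-γ') ≤ Ω x * (1 + ‖x‖) ^ (-γ') := by
      intro x hx
      rw [mem_closedBall, dist_eq_norm] at hx
      have hΩx : lam j / 2 ≤ Ω x := by
        have h := hLip x₀ x
        have h1 : Ω x₀ - Ω x ≤ C * ‖x₀ - x‖ := (abs_le.mp h).2
        rw [norm_sub_rev] at h1
        have h2 : C * ‖x - x₀‖ ≤ C * r := mul_le_mul_of_nonneg_left hx hC.le
        have hCr : C * r = lam j / 4 := by rw [hrdef]; field_simp
        linarith
      have hxle : 1 + ‖x‖ ≤ (2:ℝ) ^ (j + 3) := by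
        have h1 : ‖x‖ ≤ ‖x₀‖ + ‖x - x₀‖ := by
          calc ‖x‖ = ‖x₀ + (x - x₀)‖ := by rw [add_sub_cancel]
          _ ≤ ‖x₀‖ + ‖x - x₀‖ := norm_add_le _ _
        have h3 : (2:ℝ) ^ (j + 3) = 4 * 2 ^ (j + 1) := by ring
        nlinarith
      have hwx : ((2:ℝ) ^ (j + 3)) ^ (-γ') ≤ (1 + ‖x‖) ^ (-γ') :=
        Real.rpow_le_rpow_of_nonpos (by positivity) hxle (neg_nonpos.mpr hγ'0)
      exact mul_le_mul hΩx hwx (Real.rpow_nonneg (by positivity) _) (by linarith)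
    have hvol : (volume (closedBall x₀ r)).toReal = r ^ d * B := by
      rw [Measure.addHaar_closedBall' volume x₀ hr0.le, finrank_euclideanSpace_fin,
        ENNReal.toReal_mul, ENNReal.toReal_ofReal (by positivity)]
    have hlow : (lam j / 2 * ((2:ℝ) ^ (j + 3)) ^ (-γ')) * (r ^ d * B) ≤ I := by
      have h1 := setIntegral_ge_of_const_le (measurableSet_closedBall (x := x₀) (ε := r))
        measure_closedBall_lt_top.ne hball hint'.integrableOn
      have h2 := setIntegral_le_integral (s := closedBall x₀ r) hint'
        (Filter.Eventually.of_forall fun x => by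
          have h1 : (0:ℝ) < 1 + ‖x‖ := by positivity
          exact mul_nonneg (hpos x) (Real.rpow_nonneg h1.le _))
      calc (lam j / 2 * ((2:ℝ) ^ (j + 3)) ^ (-γ')) * (r ^ d * B)
          = (lam j / 2 * ((2:ℝ) ^ (j + 3)) ^ (-γ')) * (volume (closedBall x₀ r)).toReal := by
            rw [hvol]
        _ ≤ ∫ x in closedBall x₀ r, Ω x * (1 + ‖x‖) ^ (-γ') := by rw [mul_comm]; exact h1
        _ ≤ ∫ x, Ω x * (1 + ‖x‖) ^ (-γ') := h2
        _ = I := hIdef.symm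
    -- rewrite the power of 2
    set Q : ℝ := (2:ℝ) ^ ((3:ℝ) * γ') * (2:ℝ) ^ ((j:ℝ) * γ') with hQdef
    have hQpos : 0 < Q := by positivity
    have hP : ((2:ℝ) ^ (j + 3)) ^ (-γ') = Q⁻¹ := by
      rw [hQdef, ← Real.rpow_add (by norm_num : (0:ℝ) < 2),
        ← Real.rpow_neg (by norm_num : (0:ℝ) ≤ 2),
        ← Real.rpow_natCast 2 (j + 3), ← Real.rpow_mul (by norm_num : (0:ℝ) ≤ 2)]
      congr 1
      push_cast
      ring
    rw [hP] at hlow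
    have hstep : lam j * r ^ d ≤ 2 * Q * I / B := by
      have h1 : (0:ℝ) < 2 * Q / B := by positivity
      calc lam j * r ^ d
          = (2 * Q / B) * (lam j / 2 * Q⁻¹ * (r ^ d * B)) := by
            field_simp
        _ ≤ (2 * Q / B) * I := mul_le_mul_of_nonneg_left hlow h1.le
        _ = 2 * Q * I / B := by ring
    have hpow : lam j ^ (d + 1) = (4 * C) ^ d * (lam j * r ^ d) := by
      rw [hrdef, div_pow, pow_succ]
      field_simp
    calc lam j ^ (d + 1) = (4 * C) ^ d * (lam j * r ^ d) := hpow
      _ ≤ (4 * C) ^ d * (2 * Q * I / B) :=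
          mul_le_mul_of_nonneg_left hstep (by positivity)
      _ = K * (2:ℝ) ^ ((j : ℝ) * γ') := by
          rw [hKdef, hQdef]; field_simp
  -- deduce a linear (in rpow scale) bound on lam
  set β : ℝ := γ' / ((d : ℝ) + 1) with hβdef
  have hβ0 : 0 ≤ β := by positivity
  have hβ1 : β < 1 := by
    rw [hβdef, div_lt_one (by positivity)]
    exact hγ'lt
  set A : ℝ := K ^ (1 / ((d : ℝ) + 1)) with hAdef
  have hA0 : 0 ≤ A := Real.rpow_nonneg hK0 _
  have hlamA : ∀ j, lam j ≤ A * ((2:ℝ) ^ j) ^ β := by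
    intro j
    have h1 : A ^ (d + 1) = K := by
      have hne : ((d : ℝ) + 1) ≠ 0 := by positivity
      rw [hAdef, ← Real.rpow_natCast (K ^ (1 / ((d : ℝ) + 1))) (d + 1),
        ← Real.rpow_mul hK0,
        show (1 / ((d : ℝ) + 1)) * (((d + 1 : ℕ) : ℝ)) = 1 by push_cast; field_simp,
        Real.rpow_one]
    have h2 : (((2:ℝ) ^ j) ^ β) ^ (d + 1) = (2:ℝ) ^ ((j : ℝ) * γ') := by
      rw [← Real.rpow_natCast (((2:ℝ) ^ j) ^ β) (d + 1),
        ← Real.rpow_mul (by positivity), ← Real.rpow_natCast 2 j,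
        ← Real.rpow_mul (by norm_num : (0:ℝ) ≤ 2)]
      congr 1
      rw [hβdef]
      push_cast
      field_simp
    have hstep : (A * ((2:ℝ) ^ j) ^ β) ^ (d + 1) = K * (2:ℝ) ^ ((j : ℝ) * γ') := by
      rw [mul_pow, h1, h2]
    have h := key j
    rw [← hstep] at h
    exact le_of_pow_le_pow_left₀ (by omega) (by positivity) h
  have hΩ₁le : ∀ x, Ω₁ x ≤ A * (1 + ‖x‖) ^ β := by
    intro x
    obtain ⟨j, hxj, hval⟩ := hΩ₁ x
    rw [hval]
    refine (hlamA j).trans (mul_le_mul_of_nonneg_left ?_ hA0)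
    apply Real.rpow_le_rpow (by positivity) ?_ hβ0
    rcases Nat.eq_zero_or_pos j with hj | hj
    · subst hj; simp
    · have := hE_norm' j x hj hxj
      linarith [norm_nonneg x]
  -- the weight comparison, in one real variable
  set s : ℝ := (d : ℝ) + 1 with hsdef
  have hs0 : 0 < s := by positivity
  have hwcomp : ∀ t : ℝ, 0 ≤ t →
      (1 + t ^ 2) ^ (-s / 2) ≤ 2 ^ (s / 2) * (1 + t) ^ (-s) := by
    intro t ht
    have hb1 : (0:ℝ) < 1 + t ^ 2 := by positivity
    have hb2 : (0:ℝ) < 1 + t := by positivity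
    have hkey : (1 + t) ^ s ≤ 2 ^ (s / 2) * (1 + t ^ 2) ^ (s / 2) := by
      have h1 : (1 + t) ^ s = ((1 + t) ^ (2:ℕ)) ^ (s / 2) := by
        rw [← Real.rpow_natCast (1 + t) 2, ← Real.rpow_mul hb2.le]
        congr 1
        push_cast
        ring
      have h2 : ((1 + t) ^ (2:ℕ)) ≤ 2 * (1 + t ^ 2) := by nlinarith [sq_nonneg (1 - t)]
      rw [h1]
      calc ((1 + t) ^ (2:ℕ)) ^ (s / 2) ≤ (2 * (1 + t ^ 2)) ^ (s / 2) :=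
            Real.rpow_le_rpow (by positivity) h2 (by positivity)
        _ = 2 ^ (s / 2) * (1 + t ^ 2) ^ (s / 2) :=
            Real.mul_rpow (by norm_num) hb1.le
    have hu : (0:ℝ) < (1 + t ^ 2) ^ (s / 2) := Real.rpow_pos_of_pos hb1 _
    have hv : (0:ℝ) < (1 + t) ^ s := Real.rpow_pos_of_pos hb2 _
    have hc : (0:ℝ) < (2:ℝ) ^ (s / 2) := Real.rpow_pos_of_pos (by norm_num) _
    rw [show -s / 2 = -(s / 2) by ring, Real.rpow_neg hb1.le,
      Real.rpow_neg hb2.le]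
    calc ((1 + t ^ 2) ^ (s / 2))⁻¹
        ≤ ((1 + t) ^ s / 2 ^ (s / 2))⁻¹ := by
          apply inv_anti₀ (by positivity)
          rw [div_le_iff₀ hc]
          calc (1 + t) ^ s ≤ 2 ^ (s / 2) * (1 + t ^ 2) ^ (s / 2) := hkey
            _ = (1 + t ^ 2) ^ (s / 2) * 2 ^ (s / 2) := by ring
      _ = 2 ^ (s / 2) * ((1 + t) ^ s)⁻¹ := by
          rw [inv_div]
          ring
  -- measurable a.e. representative of Ω₁
  set g : EuclideanSpace ℝ (Fin d) → ℝ :=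
    fun x => lam (⌊Real.logb 2 ‖x‖⌋).toNat with hgdef
  have hgmeas : Measurable g := by
    have h1 : Measurable fun t : ℝ => Real.logb 2 t := Real.measurable_log.div_const _
    have h2 : Measurable fun x : EuclideanSpace ℝ (Fin d) => ⌊Real.logb 2 ‖x‖⌋ :=
      Int.measurable_floor.comp (h1.comp measurable_norm)
    exact (measurable_from_top (f := fun n : ℤ => lam n.toNat)).comp h2
  set N : Set (EuclideanSpace ℝ (Fin d)) :=
    ⋃ k : ℕ, sphere (0 : EuclideanSpace ℝ (Fin d)) (2 ^ (k + 1)) with hNdef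
  have hNnull : volume N = 0 :=
    measure_iUnion_null fun k =>
      Measure.addHaar_sphere_of_ne_zero volume _ (by positivity)
  have hae : Ω₁ =ᵐ[volume] g := by
    have h := measure_eq_zero_iff_ae_notMem.mp hNnull
    filter_upwards [h] with x hx
    obtain ⟨j, hxj, hval⟩ := hΩ₁ x
    have hidx : (⌊Real.logb 2 ‖x‖⌋).toNat = j := by
      rcases Nat.eq_zero_or_pos j with hj | hj
      · subst hj
        have h2 : ‖x‖ ≠ 2 := by
          intro hc
          exact hx (mem_iUnion.mpr ⟨0, by
            rw [mem_sphere, dist_zero_right]; simpa using hc⟩)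
        have hle : ‖x‖ ≤ 2 := by
          rw [hE0] at hxj
          rwa [mem_closedBall, dist_zero_right] at hxj
        have hlt : ‖x‖ < 2 := lt_of_le_of_ne hle h2
        have hfl : ⌊Real.logb 2 ‖x‖⌋ ≤ 0 := by
          rcases eq_or_lt_of_le (norm_nonneg x) with h0x | h0x
          · rw [← h0x]
            simp [Real.logb]
          · have hlog : Real.logb 2 ‖x‖ < 1 :=
              (Real.logb_lt_iff_lt_rpow one_lt_two h0x).mpr
                (by rw [Real.rpow_one]; exact hlt)
            have := Int.floor_le_floor hlog.le
            have h1 : ⌊Real.logb 2 ‖x‖⌋ < 1 := by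
              rw [Int.floor_lt]
              exact_mod_cast hlog
            omega
        rw [Int.toNat_of_nonpos hfl]
      · have hxE := hxj
        rw [hEj j hj] at hxE
        have hge : (2:ℝ) ^ j ≤ ‖x‖ := by
          have := hxE.2
          rwa [mem_ball, dist_zero_right, not_lt] at this
        have hle : ‖x‖ ≤ 2 ^ (j + 1) := by
          have := hxE.1
          rwa [mem_closedBall, dist_zero_right] at this
        have hne : ‖x‖ ≠ 2 ^ (j + 1) := by
          intro hc
          exact hx (mem_iUnion.mpr ⟨j, by
            rw [mem_sphere, dist_zero_right]; exact hc⟩)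
        have hlt : ‖x‖ < 2 ^ (j + 1) := lt_of_le_of_ne hle hne
        have h0x : (0:ℝ) < ‖x‖ := lt_of_lt_of_le (by positivity) hge
        have hfl : ⌊Real.logb 2 ‖x‖⌋ = (j : ℤ) := by
          rw [Int.floor_eq_iff]
          constructor
          · rw [Real.le_logb_iff_rpow_le one_lt_two h0x]
            rw [show ((j : ℤ) : ℝ) = ((j : ℕ) : ℝ) by push_cast; ring,
              Real.rpow_natCast]
            exact hge
          · rw [Real.logb_lt_iff_lt_rpow one_lt_two h0x]
            rw [show ((j : ℤ) : ℝ) + 1 = (((j + 1 : ℕ) : ℕ) : ℝ) by push_cast; ring,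
              Real.rpow_natCast]
            exact hlt
        rw [hfl]
        simp
    rw [hval, hgdef]
    show lam j = lam (⌊Real.logb 2 ‖x‖⌋).toNat
    rw [hidx]
  -- final domination
  have hwcont : Continuous fun x : EuclideanSpace ℝ (Fin d) =>
      (1 + ‖x‖ ^ 2) ^ (-s / 2) := by
    apply Continuous.rpow_const (continuous_const.add (continuous_norm.pow 2))
    intro x; left; exact (by positivity : (0:ℝ) < 1 + ‖x‖ ^ 2).ne'
  have hfmeas : AEStronglyMeasurable
      (fun x : EuclideanSpace ℝ (Fin d) => Ω₁ x * (1 + ‖x‖ ^ 2) ^ (-s / 2)) volume := by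
    refine ((hgmeas.mul hwcont.measurable).aestronglyMeasurable).congr ?_
    filter_upwards [hae] with x hx
    rw [hx]; rfl
  have hdom : Integrable (fun x : EuclideanSpace ℝ (Fin d) =>
      (A * 2 ^ (s / 2)) * (1 + ‖x‖) ^ (-(s - β))) volume := by
    apply Integrable.const_mul
    apply integrable_one_add_norm
    rw [finrank_euclideanSpace_fin]
    rw [hsdef]
    linarith
  have hfinal : Integrable
      (fun x : EuclideanSpace ℝ (Fin d) => Ω₁ x * (1 + ‖x‖ ^ 2) ^ (-s / 2)) volume := by
    refine hdom.mono' hfmeas ?_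
    filter_upwards with x
    have hb2 : (0:ℝ) < 1 + ‖x‖ := by positivity
    have hw0 : (0:ℝ) ≤ (1 + ‖x‖ ^ 2) ^ (-s / 2) :=
      Real.rpow_nonneg (by positivity) _
    rw [Real.norm_eq_abs, abs_of_nonneg (mul_nonneg (hΩ₁nonneg x) hw0)]
    calc Ω₁ x * (1 + ‖x‖ ^ 2) ^ (-s / 2)
        ≤ (A * (1 + ‖x‖) ^ β) * (2 ^ (s / 2) * (1 + ‖x‖) ^ (-s)) :=
          mul_le_mul (hΩ₁le x) (hwcomp ‖x‖ (norm_nonneg x)) hw0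
            (by positivity)
      _ = (A * 2 ^ (s / 2)) * ((1 + ‖x‖) ^ β * (1 + ‖x‖) ^ (-s)) := by ring
      _ = (A * 2 ^ (s / 2)) * (1 + ‖x‖) ^ (-(s - β)) := by
          rw [← Real.rpow_add hb2]
          congr 1
          ring_nf
  exact hfinal
end
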